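/- Let $d \geq 2$ and let $P(t) = \frac{(1+t^{(d-1)/2})(t^{(d+1)/2}-1)}{t-1}$ if $d-1$ is even, and $P(t) = \frac{t^d-1}{t-1}$ if $d-1$ is odd (the E-polynomial of a smooth quadric of dimension $d-1$ evaluated at $t = uv$). Then the rational function $E_{st}(t) = \frac{t^d - 1}{t^{d-1}-1}\, P(t)$ is a polynomial in $t$ if and only if $d \leq 3$; and $\lim_{t\to 1} E_{st}(t)$ equals $\frac{d(d+1)}{d-1}$ if $d-1$ is even and $\frac{d^2}{d-1}$ if $d-1$ is odd, which is not an integer for $d \geq 4$. -/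

import Mathlib

open Filter

private lemma geomPos (t : ℝ) (ht : 0 < t) {n : ℕ} (hn : 0 < n) :
    0 < ∑ i ∈ Finset.range n, t ^ i :=
  Finset.sum_pos (fun i _ => pow_pos ht i) (Finset.nonempty_range_iff.mpr hn.ne')

private lemma noPoly (a b c : ℕ) (hc : 2 ≤ c) (ha : ¬ (c ∣ a)) (hb : ¬ (c ∣ b)) (p : Polynomial ℝ)
    (h : p * (∑ i ∈ Finset.range c, Polynomial.X ^ i) =
      (∑ i ∈ Finset.range a, Polynomial.X ^ i) * ∑ i ∈ Finset.range b, Polynomial.X ^ i) :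
    False := by
  set ζ : ℂ := Complex.exp (2 * Real.pi * Complex.I / c) with hζdef
  have hprim : IsPrimitiveRoot ζ c := Complex.isPrimitiveRoot_exp c (by omega)
  have hζ1 : ζ ≠ 1 := by
    intro h1
    have h2 := (hprim.pow_eq_one_iff_dvd 1).mp (by rw [pow_one, h1])
    have := Nat.le_of_dvd one_pos h2
    omega
  have hsub : ζ - 1 ≠ 0 := sub_ne_zero.mpr hζ1
  have hsum : ∀ n : ℕ, ¬ (c ∣ n) → (∑ i ∈ Finset.range n, ζ ^ i) ≠ 0 := by
    intro n hn h0
    have := geom_sum_mul ζ n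
    rw [h0, zero_mul] at this
    exact hn ((hprim.pow_eq_one_iff_dvd n).mp (by linear_combination -this))
  have hsumc : (∑ i ∈ Finset.range c, ζ ^ i) = 0 := by
    have h1 := geom_sum_mul ζ c
    rw [(hprim.pow_eq_one_iff_dvd c).mpr dvd_rfl, sub_self] at h1
    exact (mul_eq_zero.mp h1).resolve_right hsub
  have := congrArg (Polynomial.aeval ζ) h
  simp only [map_mul, map_sum, map_pow, Polynomial.aeval_X] at this
  rw [hsumc, mul_zero] at this
  exact (mul_ne_zero (hsum a ha) (hsum b hb)) this.symm

private lemma polyId (f : ℝ → ℝ) (p : Polynomial ℝ) (a b c : ℕ) (hc : 0 < c)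
    (hf : ∀ t : ℝ, 0 < t → t ≠ 1 →
      f t = (∑ i ∈ Finset.range a, t ^ i) * (∑ i ∈ Finset.range b, t ^ i) /
        (∑ i ∈ Finset.range c, t ^ i))
    (hp : ∀ t : ℝ, 0 < t → t ≠ 1 → f t = p.eval t) :
    p * (∑ i ∈ Finset.range c, Polynomial.X ^ i) =
      (∑ i ∈ Finset.range a, Polynomial.X ^ i) * ∑ i ∈ Finset.range b, Polynomial.X ^ i := by
  apply Polynomial.eq_of_infinite_eval_eq
  apply Set.Infinite.mono (s := Set.Ioi (1:ℝ)) _ (Set.Ioi_infinite 1)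
  intro t ht
  have ht0 : (0:ℝ) < t := lt_trans one_pos ht
  have ht1 : t ≠ 1 := ne_of_gt ht
  have h1 := (hp t ht0 ht1).symm.trans (hf t ht0 ht1)
  have hcne : (∑ i ∈ Finset.range c, t ^ i) ≠ 0 := (geomPos t ht0 hc).ne'
  simp only [Set.mem_setOf_eq, Polynomial.eval_mul, Polynomial.eval_finset_sum,
    Polynomial.eval_pow, Polynomial.eval_X]
  field_simp at h1 ⊢
  linarith [h1]

private lemma tendstoAux (f : ℝ → ℝ) (a b c : ℕ) (hc : 0 < c)
    (hf : ∀ t : ℝ, 0 < t → t ≠ 1 →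
      f t = (∑ i ∈ Finset.range a, t ^ i) * (∑ i ∈ Finset.range b, t ^ i) /
        (∑ i ∈ Finset.range c, t ^ i)) :
    Tendsto f (nhdsWithin 1 (Set.Ioi 0 \ {1})) (nhds ((a * b : ℝ) / c)) := by
  apply tendsto_nhdsWithin_congr
    (f := fun t : ℝ => (∑ i ∈ Finset.range a, t ^ i) * (∑ i ∈ Finset.range b, t ^ i) /
        (∑ i ∈ Finset.range c, t ^ i))
  · intro x hx
    exact (hf x hx.1 (by simpa using hx.2)).symm
  · apply tendsto_nhdsWithin_of_tendsto_nhds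
    have hcont : ContinuousAt (fun t : ℝ => (∑ i ∈ Finset.range a, t ^ i) *
        (∑ i ∈ Finset.range b, t ^ i) / (∑ i ∈ Finset.range c, t ^ i)) 1 := by
      apply ContinuousAt.div
      · fun_prop
      · fun_prop
      · simp only [one_pow, Finset.sum_const, Finset.card_range, nsmul_eq_mul, mul_one]
        exact_mod_cast (Nat.cast_pos.mpr hc).ne'
    have := hcont.tendsto
    simpa using this

private lemma formulaEven (d m : ℕ) (hm : 1 ≤ m) (hdm : d = 2 * m + 1) (P Est : ℝ → ℝ)
    (hP : ∀ t : ℝ, 0 < t → t ≠ 1 → P t =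
      if Even (d - 1) then
        (1 + t ^ (((d : ℝ) - 1) / 2)) * (t ^ (((d : ℝ) + 1) / 2) - 1) / (t - 1)
      else (t ^ d - 1) / (t - 1))
    (hEst : ∀ t : ℝ, 0 < t → t ≠ 1 →
      Est t = ((t ^ d - 1) / (t ^ (d - 1) - 1)) * P t) :
    ∀ t : ℝ, 0 < t → t ≠ 1 → Est t =
      (∑ i ∈ Finset.range d, t ^ i) * (∑ i ∈ Finset.range (m + 1), t ^ i) /
        (∑ i ∈ Finset.range m, t ^ i) := by
  intro t ht ht1
  have hpar : Even (d - 1) := by subst hdm; simp only [Nat.add_sub_cancel]; exact even_two_mul m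
  rw [hEst t ht ht1, hP t ht ht1, if_pos hpar]
  have e1 : t ^ (((d : ℝ) - 1) / 2) = t ^ m := by
    rw [show ((d : ℝ) - 1) / 2 = (m : ℕ) by subst hdm; push_cast; ring]
    exact Real.rpow_natCast t m
  have e2 : t ^ (((d : ℝ) + 1) / 2) = t ^ (m + 1) := by
    rw [show ((d : ℝ) + 1) / 2 = ((m + 1 : ℕ) : ℝ) by subst hdm; push_cast; ring]
    exact Real.rpow_natCast t (m + 1)
  rw [e1, e2]
  have hsub : t - 1 ≠ 0 := sub_ne_zero.mpr ht1
  have hga := geom_sum_mul t d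
  have hgb := geom_sum_mul t (m + 1)
  have hgm := geom_sum_mul t m
  have hd1 : t ^ (d - 1) - 1 = (1 + t ^ m) * ((∑ i ∈ Finset.range m, t ^ i) * (t - 1)) := by
    rw [hgm, show d - 1 = 2 * m by omega]; ring
  rw [← hga, ← hgb, hd1]
  have hsm : (∑ i ∈ Finset.range m, t ^ i) ≠ 0 := (geomPos t ht hm).ne'
  have h1m : (1 : ℝ) + t ^ m ≠ 0 := by positivity
  field_simp

private lemma formulaOdd (d : ℕ) (hd : 2 ≤ d) (hpar : ¬ Even (d - 1)) (P Est : ℝ → ℝ)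
    (hP : ∀ t : ℝ, 0 < t → t ≠ 1 → P t =
      if Even (d - 1) then
        (1 + t ^ (((d : ℝ) - 1) / 2)) * (t ^ (((d : ℝ) + 1) / 2) - 1) / (t - 1)
      else (t ^ d - 1) / (t - 1))
    (hEst : ∀ t : ℝ, 0 < t → t ≠ 1 →
      Est t = ((t ^ d - 1) / (t ^ (d - 1) - 1)) * P t) :
    ∀ t : ℝ, 0 < t → t ≠ 1 → Est t =
      (∑ i ∈ Finset.range d, t ^ i) * (∑ i ∈ Finset.range d, t ^ i) /
        (∑ i ∈ Finset.range (d - 1), t ^ i) := by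
  intro t ht ht1
  rw [hEst t ht ht1, hP t ht ht1, if_neg hpar]
  have hsub : t - 1 ≠ 0 := sub_ne_zero.mpr ht1
  have hga := geom_sum_mul t d
  have hgb := geom_sum_mul t (d - 1)
  rw [← hga, ← hgb]
  have hsm : (∑ i ∈ Finset.range (d - 1), t ^ i) ≠ 0 := (geomPos t ht (by omega)).ne'
  field_simp

theorem stmt7 (d : ℕ) (hd : 2 ≤ d) (P Est : ℝ → ℝ)
    (hP : ∀ t : ℝ, 0 < t → t ≠ 1 → P t =
      if Even (d - 1) then
        (1 + t ^ (((d : ℝ) - 1) / 2)) * (t ^ (((d : ℝ) + 1) / 2) - 1) / (t - 1)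
      else (t ^ d - 1) / (t - 1))
    (hEst : ∀ t : ℝ, 0 < t → t ≠ 1 →
      Est t = ((t ^ d - 1) / (t ^ (d - 1) - 1)) * P t) :
    ((∃ p : Polynomial ℝ, ∀ t : ℝ, 0 < t → t ≠ 1 → Est t = p.eval t) ↔ d ≤ 3) ∧
    Tendsto Est (nhdsWithin 1 (Set.Ioi 0 \ {1}))
      (nhds (if Even (d - 1) then ((d : ℝ) * (d + 1)) / (d - 1)
             else ((d : ℝ) ^ 2) / (d - 1))) ∧
    (4 ≤ d → ¬ ∃ n : ℤ,
      (if Even (d - 1) then ((d : ℝ) * (d + 1)) / (d - 1)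
       else ((d : ℝ) ^ 2) / (d - 1)) = n) := by
  by_cases hpar : Even (d - 1)
  · -- d odd, d = 2m+1
    obtain ⟨m, hm⟩ := hpar
    have hpar' : Even (d - 1) := ⟨m, hm⟩
    have hdm : d = 2 * m + 1 := by omega
    have hm1 : 1 ≤ m := by omega
    have hrw := formulaEven d m hm1 hdm P Est hP hEst
    refine ⟨⟨?_, ?_⟩, ?_, ?_⟩
    · rintro ⟨p, hp⟩
      by_contra hd3
      push_neg at hd3
      have hm2 : 2 ≤ m := by omega
      refine noPoly d (m + 1) m hm2 ?_ ?_ p (polyId Est p d (m + 1) m (by omega) hrw hp)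
      · intro hdvd
        have h1 : m ∣ d - 2 * m := Nat.dvd_sub hdvd (dvd_mul_left m 2)
        rw [show d - 2 * m = 1 by omega] at h1
        have := Nat.le_of_dvd one_pos h1
        omega
      · intro hdvd
        have h1 : m ∣ (m + 1) - m := Nat.dvd_sub hdvd dvd_rfl
        rw [show (m + 1) - m = 1 by omega] at h1
        have := Nat.le_of_dvd one_pos h1
        omega
    · intro hd3
      have hm' : m = 1 := by omega
      subst hm'
      refine ⟨(∑ i ∈ Finset.range d, Polynomial.X ^ i) *
        (∑ i ∈ Finset.range 2, Polynomial.X ^ i), ?_⟩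
      intro t ht ht1
      rw [hrw t ht ht1]
      simp [Polynomial.eval_finset_sum]
    · rw [if_pos hpar']
      have h := tendstoAux Est d (m + 1) m (by omega) hrw
      have heq : ((d : ℝ) * (d + 1)) / ((d : ℝ) - 1) = ((d : ℕ) * ((m + 1 : ℕ)) : ℝ) / (m : ℕ) := by
        subst hdm
        have hm0 : (m : ℝ) ≠ 0 := Nat.cast_ne_zero.mpr (by omega)
        have hmpos : (0 : ℝ) < (m : ℝ) := Nat.cast_pos.mpr hm1
        push_cast
        rw [div_eq_div_iff (by linarith) hm0]
        ring
      rw [heq]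
      exact_mod_cast h
    · intro hd4
      rintro ⟨n, hn⟩
      rw [if_pos hpar'] at hn
      have hd4' : (4 : ℝ) ≤ (d : ℝ) := by exact_mod_cast hd4
      have hne : ((d : ℝ) - 1) ≠ 0 := by linarith
      rw [div_eq_iff hne] at hn
      have hz : (d : ℤ) * (d + 1) = n * ((d : ℤ) - 1) := by exact_mod_cast hn
      have hdvd : ((d : ℤ) - 1) ∣ 2 := ⟨n - (d : ℤ) - 2, by linear_combination hz⟩
      have h1 := Int.le_of_dvd (by norm_num) hdvd
      have h2 : (4 : ℤ) ≤ (d : ℤ) := by exact_mod_cast hd4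
      omega
  · -- d even
    have hrw := formulaOdd d hd hpar P Est hP hEst
    refine ⟨⟨?_, ?_⟩, ?_, ?_⟩
    · rintro ⟨p, hp⟩
      by_contra hd3
      push_neg at hd3
      have key : ¬ ((d - 1) ∣ d) := by
        intro hdvd
        have h1 : (d - 1) ∣ d - (d - 1) := Nat.dvd_sub hdvd dvd_rfl
        rw [show d - (d - 1) = 1 by omega] at h1
        have := Nat.le_of_dvd one_pos h1
        omega
      exact noPoly d d (d - 1) (by omega) key key p
        (polyId Est p d d (d - 1) (by omega) hrw hp)
    · intro hd3
      have hd2 : d = 2 := by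
        interval_cases d
        · rfl
        · exact absurd (by decide : Even (3 - 1)) hpar
      subst hd2
      refine ⟨(∑ i ∈ Finset.range 2, Polynomial.X ^ i) *
        (∑ i ∈ Finset.range 2, Polynomial.X ^ i), ?_⟩
      intro t ht ht1
      rw [hrw t ht ht1]
      simp [Polynomial.eval_finset_sum]
    · rw [if_neg hpar]
      have h := tendstoAux Est d d (d - 1) (by omega) hrw
      have heq : ((d : ℝ) ^ 2) / ((d : ℝ) - 1) = ((d : ℕ) * (d : ℕ) : ℝ) / ((d - 1 : ℕ) : ℝ) := by
        rw [Nat.cast_sub (by omega)]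
        push_cast
        ring_nf
      rw [heq]
      exact_mod_cast h
    · intro hd4
      rintro ⟨n, hn⟩
      rw [if_neg hpar] at hn
      have hd4' : (4 : ℝ) ≤ (d : ℝ) := by exact_mod_cast hd4
      have hne : ((d : ℝ) - 1) ≠ 0 := by linarith
      rw [div_eq_iff hne] at hn
      have hz : (d : ℤ) ^ 2 = n * ((d : ℤ) - 1) := by exact_mod_cast hn
      have hdvd : ((d : ℤ) - 1) ∣ 1 := ⟨n - (d : ℤ) - 1, by linear_combination hz⟩
      have h1 := Int.le_of_dvd (by norm_num) hdvd
      have h2 : (4 : ℤ) ≤ (d : ℤ) := by exact_mod_cast hd4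
      omega
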